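/- (Lemma 4.6(2).) Every point s ∈ 𝕜⁷ (with coordinates x₀, x₁, x₂, b₀, b₁, c₀, c₁) satisfying Ψ(s) = 0 and π(s) = 0 is a singular point of the hypersurface Ψ = 0, i.e. all seven partial derivatives of Ψ vanish at s: ∇Ψ(s) = 0. -/

import Mathlib

open MvPolynomial Finset

noncomputable section

variable (𝕜 : Type*) [Field 𝕜]

/-- `L₀ = c₀x₀ − b₀x₁` in `R = 𝕜[x₀,x₁,x₂,b₀,b₁,c₀,c₁]`, where the variables
`x₀,x₁,x₂,b₀,b₁,c₀,c₁` are `X 0, X 1, X 2, X 3, X 4, X 5, X 6` respectively. -/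
def L0 : MvPolynomial (Fin 7) 𝕜 := X 5 * X 0 - X 3 * X 1

/-- `L₁ = c₁x₀ − b₁x₁`. -/
def L1 : MvPolynomial (Fin 7) 𝕜 := X 6 * X 0 - X 4 * X 1

/-- `π = b₁c₀ − b₀c₁`. -/
def piPoly : MvPolynomial (Fin 7) 𝕜 := X 4 * X 5 - X 3 * X 6

/-- `Δ = σ(x₀,x₁) − x₂^p` where `σ(A,B) = ∑_{i=1}^{p-1} σ_i A^i B^{p-i}`. -/
def Delta (p : ℕ) (s : ℕ → 𝕜) : MvPolynomial (Fin 7) 𝕜 :=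
  (∑ i ∈ Ioo 0 p, C (s i) * X 0 ^ i * X 1 ^ (p - i)) - X 2 ^ p

/-- `𝓛 = L₀^m + ∑_{k=1}^{m-1} e_k L₀^{m-k} L₁^k`. -/
def calL (m : ℕ) (e : ℕ → 𝕜) : MvPolynomial (Fin 7) 𝕜 :=
  L0 𝕜 ^ m + ∑ k ∈ Ioo 0 m, C (e k) * L0 𝕜 ^ (m - k) * L1 𝕜 ^ k

/-- `Ψ = L₁^d − (−1)^d π^p Δ 𝓛` with `d = m + p`. -/
def Psi (p m : ℕ) (s e : ℕ → 𝕜) : MvPolynomial (Fin 7) 𝕜 :=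
  L1 𝕜 ^ (m + p) - C ((-1 : 𝕜) ^ (m + p)) * piPoly 𝕜 ^ p * Delta 𝕜 p s * calL 𝕜 m e

/-- **Lemma 4.6(2).**  Every point `s ∈ 𝕜⁷` with `Ψ(s) = 0` and `π(s) = 0`
is a singular point of the hypersurface `Ψ = 0`: all seven partial derivatives of `Ψ`
vanish at `s`. -/
theorem singular_on_pi_zero_locus
    (p : ℕ) (hp : p.Prime) [CharP 𝕜 p] (m : ℕ) (s e : ℕ → 𝕜)
    (v : Fin 7 → 𝕜)
    (hΨ : eval v (Psi 𝕜 p m s e) = 0)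
    (hπ : eval v (piPoly 𝕜) = 0) :
    ∀ i : Fin 7, eval v (pderiv i (Psi 𝕜 p m s e)) = 0 := by
  have hp0 : (p : 𝕜) = 0 := CharP.cast_eq_zero 𝕜 p
  have hpne : p ≠ 0 := hp.ne_zero
  have hπp : eval v (piPoly 𝕜 ^ p) = 0 := by
    rw [map_pow, hπ, zero_pow hpne]
  have hL1 : eval v (L1 𝕜) = 0 := by
    rw [Psi] at hΨ
    simp only [map_sub, map_mul, map_pow, hπ, zero_pow hpne, mul_zero, zero_mul, sub_zero] at hΨ
    exact pow_eq_zero_iff (Nat.add_pos_right m hp.pos).ne' |>.mp hΨ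
  intro i
  rw [Psi, map_sub, map_sub]
  have h1 : eval v (pderiv i (L1 𝕜 ^ (m + p))) = 0 := by
    have hne : m + p - 1 ≠ 0 :=
      Nat.sub_ne_zero_of_lt (lt_of_lt_of_le hp.one_lt (Nat.le_add_left p m))
    rw [(pderiv i).leibniz_pow]
    simp [smul_eq_mul, hL1, zero_pow hne]
  have h2 : eval v (pderiv i (C ((-1 : 𝕜) ^ (m + p)) * piPoly 𝕜 ^ p * Delta 𝕜 p s * calL 𝕜 m e)) = 0 := by
    have hd : pderiv i (piPoly 𝕜 ^ p) = 0 := by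
      rw [(pderiv i).leibniz_pow]
      simp [nsmul_eq_mul, CharP.cast_eq_zero]
    simp only [Derivation.leibniz, hd, pderiv_C, smul_zero, zero_add, smul_eq_mul]
    simp [mul_comm, mul_assoc, hπp, hπ, zero_pow hpne]
  rw [h1, h2, sub_zero]

end
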